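/- If a probability distribution P on ℝ satisfies P(σ) = P(-σ)·e^σ, then the mean of σ is nonnegative: ⟨σ⟩ ≥ 0. -/

import Mathlib

open MeasureTheory Real

/-- If a probability density `p` on ℝ with finite first moment satisfies the detailed
fluctuation theorem `p σ = p (-σ) * exp σ`, then the mean of σ is nonnegative. -/
theorem ft_mean_entropy_nonneg
    (p : ℝ → ℝ) (hp_nonneg : ∀ σ, 0 ≤ p σ)
    (hp_norm : ∫ σ, p σ = 1)
    (hsym : ∀ σ, p σ = p (-σ) * Real.exp σ)
    (hint : Integrable (fun σ => σ * p σ)) :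
    0 ≤ ∫ σ, σ * p σ := by
  have hg : Integrable (fun σ => σ * p (-σ)) := by
    have h2 : Integrable (fun t : ℝ => -(t * p (-t))) := by
      simpa [neg_mul] using hint.comp_neg
    have h3 := h2.neg
    convert h3 using 1
    funext t; simp
  have hI : ∫ σ, σ * p (-σ) = -∫ σ, σ * p σ := by
    have h := MeasureTheory.integral_neg_eq_self (fun σ => σ * p σ) volume
    have h2 : ∫ (σ : ℝ), -(σ * p (-σ)) = ∫ σ, σ * p σ := by
      simpa [neg_mul] using h
    rw [integral_neg] at h2
    linarith
  have hdiff : ∫ σ, (σ * p σ - σ * p (-σ)) = 2 * ∫ σ, σ * p σ := by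
    rw [integral_sub hint hg, hI]; ring
  have hnn : 0 ≤ ∫ σ, (σ * p σ - σ * p (-σ)) := by
    apply integral_nonneg
    intro σ
    have hps : p (-σ) = p σ * Real.exp (-σ) := by
      have h := hsym σ
      have he : Real.exp σ ≠ 0 := (Real.exp_pos σ).ne'
      field_simp [Real.exp_neg]
      rw [h, mul_assoc, ← Real.exp_add, add_neg_cancel, Real.exp_zero, mul_one]
    have : σ * p σ - σ * p (-σ) = σ * (1 - Real.exp (-σ)) * p σ := by
      rw [hps]; ring
    show 0 ≤ σ * p σ - σ * p (-σ)
    rw [this]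
    apply mul_nonneg _ (hp_nonneg σ)
    rcases le_or_gt 0 σ with hσ | hσ
    · have : Real.exp (-σ) ≤ 1 := Real.exp_le_one_iff.mpr (by linarith)
      nlinarith
    · have : 1 ≤ Real.exp (-σ) := Real.one_le_exp_iff.mpr (by linarith)
      nlinarith
  linarith [hdiff ▸ hnn]
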